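/- Let p be a prime, d ≥ 2 an integer, and k a real number. If p > 2 and ζ*(d,p) ≥ k > 0.04, then d ≤ 3/(k − 0.04). If p = 2 and ζ*(d,2) ≥ k > 0.032, then d ≤ 4/(k − 0.032). -/

import Mathlib

open Module

/-- `μ*(d,p)`: the smallest dimension of `[V,x] = range (x - id)` over all linear
automorphisms `x` of order exactly `d` of finite-dimensional vector spaces over `𝔽_p`
(with the convention `μ*(1,p) = 0`). -/
noncomputable def mustar (p d : ℕ) : ℕ :=
  sInf {μ : ℕ | ∃ (n : ℕ) (x : (Fin n → ZMod p) ≃ₗ[ZMod p] (Fin n → ZMod p)),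
    orderOf x = d ∧
    finrank (ZMod p) (LinearMap.range
      ((x : (Fin n → ZMod p) →ₗ[ZMod p] (Fin n → ZMod p)) - LinearMap.id)) = μ}

/-- `ζ*(d,p) = (1/d)·(1 + Σ_{m ∣ d, m > 1} φ(m)·p^(−μ*(m,p)))`. -/
noncomputable def zetastar (p d : ℕ) : ℝ :=
  (1 / (d : ℝ)) * (1 + ∑ m ∈ d.divisors.filter (fun m => 1 < m),
    (Nat.totient m : ℝ) * (p : ℝ) ^ (-(mustar p m : ℤ)))

open Polynomial

section Annihilator

variable {p : ℕ} [Fact p.Prime] {n : ℕ}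

local notation "Vn" => Fin n → ZMod p

lemma exists_annihilator (x : Vn ≃ₗ[ZMod p] Vn) (R : ℕ)
    (h : finrank (ZMod p) (LinearMap.range ((x : Vn →ₗ[ZMod p] Vn) - LinearMap.id)) ≤ R) :
    ∃ Q : Polynomial (ZMod p), Q.Monic ∧ Q.natDegree = R ∧
      aeval (x : Vn →ₗ[ZMod p] Vn) ((X - 1) * Q) = 0 := by
  set u : Module.End (ZMod p) Vn := (x : Vn →ₗ[ZMod p] Vn) with hu
  have hid : (LinearMap.id : Vn →ₗ[ZMod p] Vn) = (1 : Module.End (ZMod p) Vn) := rfl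
  rw [hid] at h
  set W := LinearMap.range (u - 1) with hWdef
  have hW : ∀ w ∈ W, u w ∈ W := by
    rintro w ⟨v, rfl⟩
    exact ⟨u v, by simp [LinearMap.sub_apply, map_sub]⟩
  set y := u.restrict hW with hy
  have hyC : aeval y y.charpoly = 0 := LinearMap.aeval_self_charpoly y
  have hdeg : y.charpoly.natDegree = finrank (ZMod p) W := y.charpoly_natDegree
  -- aeval commutes with restriction
  have key : ∀ (q : Polynomial (ZMod p)) (w : Vn) (hw : w ∈ W),
      aeval u q w = ((aeval y q ⟨w, hw⟩ : W) : Vn) := by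
    intro q
    induction q using Polynomial.induction_on' with
    | add f g hf hg =>
      intro w hw
      simp [map_add, LinearMap.add_apply, hf w hw, hg w hw]
    | monomial k a =>
      intro w hw
      have hpow : ∀ (k : ℕ) (w : Vn) (hw : w ∈ W), (u ^ k) w = ((y ^ k) ⟨w, hw⟩ : W) := by
        intro k
        induction k with
        | zero => intro w hw; simp
        | succ k ih =>
          intro w hw
          have h1 : (u ^ (k+1)) w = u ((u ^ k) w) := by
            rw [pow_succ', Module.End.mul_apply]
          rw [h1, ih w hw]
          have h2 : (y ^ (k+1)) ⟨w, hw⟩ = y ((y ^ k) ⟨w, hw⟩) := by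
            rw [pow_succ', Module.End.mul_apply]
          rw [h2, u.restrict_apply]
      simp only [aeval_monomial]
      rw [show ((algebraMap (ZMod p) (Module.End (ZMod p) Vn)) a * u ^ k) w
            = a • ((u ^ k) w) by rfl]
      rw [hpow k w hw]
      rfl
  have hm1 : (X - 1 : Polynomial (ZMod p)).Monic := by
    simpa using monic_X_sub_C (1 : ZMod p)
  refine ⟨y.charpoly * (X - 1) ^ (R - finrank (ZMod p) W), ?_, ?_, ?_⟩
  · exact (LinearMap.charpoly_monic y).mul (hm1.pow _)
  · rw [(LinearMap.charpoly_monic y).natDegree_mul (hm1.pow _)]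
    have : (X - 1 : Polynomial (ZMod p)).natDegree = 1 := by
      simpa using natDegree_X_sub_C (1 : ZMod p)
    rw [hdeg, natDegree_pow, this]
    omega
  · have base : aeval u (y.charpoly * (X - 1)) = 0 := by
      apply LinearMap.ext
      intro v
      have : aeval u (y.charpoly * (X - 1)) v = aeval u y.charpoly ((u - 1) v) := by
        rw [map_mul]
        simp [Module.End.mul_apply]
      rw [this]
      have hmem : (u - 1) v ∈ W := ⟨v, rfl⟩
      rw [key y.charpoly _ hmem, hyC]
      simp
    have : (X - 1 : Polynomial (ZMod p)) * (y.charpoly * (X - 1) ^ (R - finrank (ZMod p) W))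
        = (X - 1) ^ (R - finrank (ZMod p) W) * (y.charpoly * (X - 1)) := by ring
    rw [this, map_mul, base, mul_zero]

lemma pow_eq_one_of_annihilator (x : Vn ≃ₗ[ZMod p] Vn) (g B Rm : Polynomial (ZMod p)) (k N : ℕ)
    (hid : g * B = X ^ k * (X ^ N - 1) + (p : Polynomial (ZMod p)) * Rm)
    (hg : aeval (x : Vn →ₗ[ZMod p] Vn) g = 0) : x ^ N = 1 := by
  set u : Module.End (ZMod p) Vn := (x : Vn →ₗ[ZMod p] Vn) with hu
  set v : Module.End (ZMod p) Vn := (x.symm : Vn →ₗ[ZMod p] Vn) with hv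
  have hvu : v * u = 1 := by
    apply LinearMap.ext; intro w
    simp [Module.End.mul_apply, hu, hv]
  have huv : u * v = 1 := by
    apply LinearMap.ext; intro w
    simp [Module.End.mul_apply, hu, hv]
  have hpz : (p : Polynomial (ZMod p)) = 0 := by
    calc (p : Polynomial (ZMod p)) = Polynomial.C ((p : ℕ) : ZMod p) := by
          rw [Polynomial.C_eq_natCast]
    _ = 0 := by rw [ZMod.natCast_self, Polynomial.C_0]
  have h0 : u ^ k * (u ^ N - 1) = 0 := by
    have := congrArg (aeval u) hid
    rw [map_mul, hg, zero_mul, hpz, zero_mul, add_zero, map_mul, map_sub, map_pow, map_pow,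
      map_one, aeval_X] at this
    exact this.symm
  have hcomm : Commute v u := by
    unfold Commute SemiconjBy; rw [hvu, huv]
  have hvk : v ^ k * u ^ k = 1 := by
    rw [← hcomm.mul_pow, hvu, one_pow]
  have h1 : u ^ N - 1 = 0 := by
    calc u ^ N - 1 = (v ^ k * u ^ k) * (u ^ N - 1) := by rw [hvk, one_mul]
    _ = v ^ k * (u ^ k * (u ^ N - 1)) := by rw [mul_assoc]
    _ = 0 := by rw [h0, mul_zero]
  have h2 : u ^ N = 1 := by rwa [sub_eq_zero] at h1
  apply LinearEquiv.toLinearMap_injective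
  apply LinearMap.ext
  intro w
  have : (u ^ N) w = w := by rw [h2]; rfl
  rw [Module.End.pow_apply] at this
  show (((x ^ N :  Vn ≃ₗ[ZMod p] Vn)) : Vn →ₗ[ZMod p] Vn) w = w
  rw [LinearEquiv.coe_coe, LinearEquiv.pow_apply]
  exact this



end Annihilator

section Classify

variable {p : ℕ} [Fact p.Prime] {n : ℕ}

lemma linearEquiv_pow_eq_one_of_end {x : (Fin n → ZMod p) ≃ₗ[ZMod p] (Fin n → ZMod p)} {N : ℕ}
    (h : (x : (Fin n → ZMod p) →ₗ[ZMod p] (Fin n → ZMod p)) ^ N = 1) : x ^ N = 1 := by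
  apply LinearEquiv.toLinearMap_injective
  apply LinearMap.ext
  intro w
  have : ((x : (Fin n → ZMod p) →ₗ[ZMod p] (Fin n → ZMod p)) ^ N) w = w := by rw [h]; rfl
  rw [Module.End.pow_apply] at this
  show (((x ^ N : (Fin n → ZMod p) ≃ₗ[ZMod p] (Fin n → ZMod p))) : (Fin n → ZMod p) →ₗ[ZMod p] (Fin n → ZMod p)) w = w
  rw [LinearEquiv.coe_coe, LinearEquiv.pow_apply]
  exact this

lemma pow_eq_one_of_dvd (x : (Fin n → ZMod p) ≃ₗ[ZMod p] (Fin n → ZMod p))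
    (g : Polynomial (ZMod p)) {N : ℕ}
    (hdvd : g ∣ X ^ N - 1)
    (hg : aeval (x : (Fin n → ZMod p) →ₗ[ZMod p] (Fin n → ZMod p)) g = 0) : x ^ N = 1 := by
  obtain ⟨B, hB⟩ := hdvd
  apply linearEquiv_pow_eq_one_of_end (N := N)
  have := congrArg (aeval (x : (Fin n → ZMod p) →ₗ[ZMod p] (Fin n → ZMod p))) hB
  rw [map_sub, map_pow, map_one, aeval_X, map_mul, hg, zero_mul] at this
  rw [← sub_eq_zero]
  exact this

lemma classify_rank_one (x : (Fin n → ZMod p) ≃ₗ[ZMod p] (Fin n → ZMod p))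
    (h : finrank (ZMod p) (LinearMap.range ((x : (Fin n → ZMod p) →ₗ[ZMod p] (Fin n → ZMod p)) - LinearMap.id)) ≤ 1) :
    x ^ (p - 1) = 1 ∨ x ^ p = 1 := by
  have hp2 : 2 ≤ p := (Fact.out : p.Prime).two_le
  obtain ⟨Q, hQm, hQd, hQa⟩ := exists_annihilator x 1 h
  set u : Module.End (ZMod p) (Fin n → ZMod p) := (x : (Fin n → ZMod p) →ₗ[ZMod p] (Fin n → ZMod p)) with hu
  set v : Module.End (ZMod p) (Fin n → ZMod p) := (x.symm : (Fin n → ZMod p) →ₗ[ZMod p] (Fin n → ZMod p)) with hv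
  have huv : u * v = 1 := by
    apply LinearMap.ext; intro w; simp [Module.End.mul_apply, hu, hv]
  set a : ZMod p := -(Q.coeff 0) with ha
  have hQ : Q = X - C a := by
    have := hQm.as_sum
    rw [hQd] at this
    simp only [Finset.sum_range_succ, Finset.sum_range_zero, zero_add, pow_zero, pow_one,
      mul_one] at this
    rw [this, ha, map_neg, sub_neg_eq_add]
  rw [hQ] at hQa
  by_cases ha0 : a = 0
  · -- x = 1
    left
    have h1 : (u - 1) * u = 0 := by
      have : aeval u ((X - 1) * (X - C a)) = (u - 1) * u := by
        rw [ha0]; simp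
      rwa [this] at hQa
    have h2 : u - 1 = 0 := by
      calc u - 1 = ((u - 1) * u) * v := by rw [mul_assoc, huv, mul_one]
      _ = 0 := by rw [h1, zero_mul]
    have h3 : u ^ (p - 1) = 1 := by
      have : u = 1 := by rwa [sub_eq_zero] at h2
      rw [this, one_pow]
    exact linearEquiv_pow_eq_one_of_end h3
  · by_cases ha1 : a = 1
    · -- unipotent : x^p = 1
      right
      rcases subsingleton_or_nontrivial (Fin n → ZMod p) with hV | hV
      · apply linearEquiv_pow_eq_one_of_end (N := p)
        apply Subsingleton.elim
      · haveI hchar : CharP (Module.End (ZMod p) (Fin n → ZMod p)) p :=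
          charP_of_injective_ringHom
            (RingHom.injective (algebraMap (ZMod p) (Module.End (ZMod p) (Fin n → ZMod p)))) p
        have hsq : (u - 1) * (u - 1) = 0 := by
          have : aeval u ((X - 1) * (X - C a)) = (u - 1) * (u - 1) := by
            rw [ha1]; simp
          rwa [this] at hQa
        have hnil : (u - 1) ^ p = 0 := by
          calc (u - 1) ^ p = (u - 1) ^ 2 * (u - 1) ^ (p - 2) := by
                rw [← pow_add]; congr 1; omega
          _ = 0 := by rw [pow_two, hsq, zero_mul]
        have hfrob : (u - 1) ^ p = u ^ p - 1 := by
          have := sub_pow_char_of_commute (p := p) (x := u) (y := 1) (Commute.one_right u)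
          simpa using this
        apply linearEquiv_pow_eq_one_of_end (N := p)
        rw [← sub_eq_zero, ← hfrob, hnil]
    · -- semisimple, distinct eigenvalues 1 and a
      left
      apply pow_eq_one_of_dvd x ((X - 1) * (X - C a)) ?_ hQa
      have hcop : IsCoprime (X - C (1 : ZMod p)) (X - C a) := by
        apply isCoprime_X_sub_C_of_isUnit_sub
        have : (1 : ZMod p) - a ≠ 0 := fun hcon => ha1 (sub_eq_zero.mp hcon).symm
        exact this.isUnit
      have hd1 : (X - 1 : Polynomial (ZMod p)) ∣ X ^ (p - 1) - 1 := by
        have : (X - C (1 : ZMod p)) ∣ X ^ (p - 1) - 1 := by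
          rw [dvd_iff_isRoot]
          simp [IsRoot]
        simpa using this
      have hd2 : (X - C a) ∣ X ^ (p - 1) - 1 := by
        rw [dvd_iff_isRoot]
        simp [IsRoot, ZMod.pow_card_sub_one_eq_one ha0]
      have := hcop.mul_dvd (by simpa using hd1) hd2
      simpa using this


lemma classify_F2_R1 {n : ℕ} (x : (Fin n → ZMod 2) ≃ₗ[ZMod 2] (Fin n → ZMod 2))
    (h : finrank (ZMod 2) (LinearMap.range ((x : (Fin n → ZMod 2) →ₗ[ZMod 2] (Fin n → ZMod 2)) - LinearMap.id)) ≤ 1) :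
    x ^ 2 = 1 := by
  obtain ⟨Q, hQm, hQd, hQa⟩ := exists_annihilator x 1 h
  have hQ : Q = X ^ 1 + ∑ i ∈ Finset.range 1, C (Q.coeff i) * X ^ i := by
    conv_lhs => rw [hQm.as_sum, hQd]
  simp only [Finset.sum_range_succ, Finset.sum_range_zero, zero_add, pow_zero, pow_one, mul_one] at hQ
  have hc : ∀ c : ZMod 2, c = 0 ∨ c = 1 := by decide
  rcases hc (Q.coeff 0) with h0 | h0 <;>
    rw [h0] at hQ <;> rw [hQ] at hQa <;>
    simp only [map_zero, map_one, map_ofNat, zero_mul, one_mul, zero_add, add_zero] at hQa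
  · exact (pow_eq_one_of_annihilator x _ (X + 1 : Polynomial (ZMod 2)) (0 : Polynomial (ZMod 2)) 1 2 (by push_cast; ring) hQa)
  · exact (pow_eq_one_of_annihilator x _ (1 : Polynomial (ZMod 2)) (0 : Polynomial (ZMod 2)) 0 2 (by push_cast; ring) hQa)

lemma classify_F2_R2 {n : ℕ} (x : (Fin n → ZMod 2) ≃ₗ[ZMod 2] (Fin n → ZMod 2))
    (h : finrank (ZMod 2) (LinearMap.range ((x : (Fin n → ZMod 2) →ₗ[ZMod 2] (Fin n → ZMod 2)) - LinearMap.id)) ≤ 2) :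
    x ^ 4 = 1 ∨ x ^ 3 = 1 := by
  obtain ⟨Q, hQm, hQd, hQa⟩ := exists_annihilator x 2 h
  have hQ : Q = X ^ 2 + ∑ i ∈ Finset.range 2, C (Q.coeff i) * X ^ i := by
    conv_lhs => rw [hQm.as_sum, hQd]
  simp only [Finset.sum_range_succ, Finset.sum_range_zero, zero_add, pow_zero, pow_one, mul_one] at hQ
  have hc : ∀ c : ZMod 2, c = 0 ∨ c = 1 := by decide
  rcases hc (Q.coeff 0) with h0 | h0 <;> rcases hc (Q.coeff 1) with h1 | h1 <;>
    rw [h0, h1] at hQ <;> rw [hQ] at hQa <;>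
    simp only [map_zero, map_one, map_ofNat, zero_mul, one_mul, zero_add, add_zero] at hQa
  · exact (Or.inl (pow_eq_one_of_annihilator x _ (X ^ 3 + X ^ 2 + X + 1 : Polynomial (ZMod 2)) (0 : Polynomial (ZMod 2)) 2 4 (by push_cast; ring) hQa))
  · exact (Or.inl (pow_eq_one_of_annihilator x _ (X ^ 2 + 1 : Polynomial (ZMod 2)) (0 : Polynomial (ZMod 2)) 1 4 (by push_cast; ring) hQa))
  · exact (Or.inl (pow_eq_one_of_annihilator x _ (X + 1 : Polynomial (ZMod 2)) (0 : Polynomial (ZMod 2)) 0 4 (by push_cast; ring) hQa))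
  · exact (Or.inr (pow_eq_one_of_annihilator x _ (1 : Polynomial (ZMod 2)) (0 : Polynomial (ZMod 2)) 0 3 (by push_cast; ring) hQa))

lemma classify_F2_R3 {n : ℕ} (x : (Fin n → ZMod 2) ≃ₗ[ZMod 2] (Fin n → ZMod 2))
    (h : finrank (ZMod 2) (LinearMap.range ((x : (Fin n → ZMod 2) →ₗ[ZMod 2] (Fin n → ZMod 2)) - LinearMap.id)) ≤ 3) :
    x ^ 4 = 1 ∨ x ^ 6 = 1 ∨ x ^ 7 = 1 := by
  obtain ⟨Q, hQm, hQd, hQa⟩ := exists_annihilator x 3 h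
  have hQ : Q = X ^ 3 + ∑ i ∈ Finset.range 3, C (Q.coeff i) * X ^ i := by
    conv_lhs => rw [hQm.as_sum, hQd]
  simp only [Finset.sum_range_succ, Finset.sum_range_zero, zero_add, pow_zero, pow_one, mul_one] at hQ
  have hc : ∀ c : ZMod 2, c = 0 ∨ c = 1 := by decide
  rcases hc (Q.coeff 0) with h0 | h0 <;> rcases hc (Q.coeff 1) with h1 | h1 <;> rcases hc (Q.coeff 2) with h2 | h2 <;>
    rw [h0, h1, h2] at hQ <;> rw [hQ] at hQa <;>
    simp only [map_zero, map_one, map_ofNat, zero_mul, one_mul, zero_add, add_zero] at hQa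
  · exact (Or.inl (pow_eq_one_of_annihilator x _ (X ^ 3 + X ^ 2 + X + 1 : Polynomial (ZMod 2)) (0 : Polynomial (ZMod 2)) 3 4 (by push_cast; ring) hQa))
  · exact (Or.inl (pow_eq_one_of_annihilator x _ (X ^ 2 + 1 : Polynomial (ZMod 2)) (0 : Polynomial (ZMod 2)) 2 4 (by push_cast; ring) hQa))
  · exact (Or.inl (pow_eq_one_of_annihilator x _ (X + 1 : Polynomial (ZMod 2)) (0 : Polynomial (ZMod 2)) 1 4 (by push_cast; ring) hQa))
  · exact (Or.inr (Or.inl (pow_eq_one_of_annihilator x _ (X ^ 3 + 1 : Polynomial (ZMod 2)) (0 : Polynomial (ZMod 2)) 1 6 (by push_cast; ring) hQa)))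
  · exact (Or.inr (Or.inl (pow_eq_one_of_annihilator x _ (X ^ 2 + X + 1 : Polynomial (ZMod 2)) (0 : Polynomial (ZMod 2)) 0 6 (by push_cast; ring) hQa)))
  · exact (Or.inr (Or.inr (pow_eq_one_of_annihilator x _ (X ^ 3 + X + 1 : Polynomial (ZMod 2)) (X ^ 4 + -1 * X ^ 3 : Polynomial (ZMod 2)) 0 7 (by push_cast; ring) hQa)))
  · exact (Or.inr (Or.inr (pow_eq_one_of_annihilator x _ (X ^ 3 + X ^ 2 + 1 : Polynomial (ZMod 2)) (X ^ 4 + -1 * X ^ 3 : Polynomial (ZMod 2)) 0 7 (by push_cast; ring) hQa)))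
  · exact (Or.inl (pow_eq_one_of_annihilator x _ (1 : Polynomial (ZMod 2)) (0 : Polynomial (ZMod 2)) 0 4 (by push_cast; ring) hQa))

lemma classify_F2_R4 {n : ℕ} (x : (Fin n → ZMod 2) ≃ₗ[ZMod 2] (Fin n → ZMod 2))
    (h : finrank (ZMod 2) (LinearMap.range ((x : (Fin n → ZMod 2) →ₗ[ZMod 2] (Fin n → ZMod 2)) - LinearMap.id)) ≤ 4) :
    x ^ 8 = 1 ∨ x ^ 12 = 1 ∨ x ^ 14 = 1 ∨ x ^ 15 = 1 := by
  obtain ⟨Q, hQm, hQd, hQa⟩ := exists_annihilator x 4 h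
  have hQ : Q = X ^ 4 + ∑ i ∈ Finset.range 4, C (Q.coeff i) * X ^ i := by
    conv_lhs => rw [hQm.as_sum, hQd]
  simp only [Finset.sum_range_succ, Finset.sum_range_zero, zero_add, pow_zero, pow_one, mul_one] at hQ
  have hc : ∀ c : ZMod 2, c = 0 ∨ c = 1 := by decide
  rcases hc (Q.coeff 0) with h0 | h0 <;> rcases hc (Q.coeff 1) with h1 | h1 <;> rcases hc (Q.coeff 2) with h2 | h2 <;> rcases hc (Q.coeff 3) with h3 | h3 <;>
    rw [h0, h1, h2, h3] at hQ <;> rw [hQ] at hQa <;>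
    simp only [map_zero, map_one, map_ofNat, zero_mul, one_mul, zero_add, add_zero] at hQa
  · exact (Or.inl (pow_eq_one_of_annihilator x _ (X ^ 7 + X ^ 6 + X ^ 5 + X ^ 4 + X ^ 3 + X ^ 2 + X + 1 : Polynomial (ZMod 2)) (0 : Polynomial (ZMod 2)) 4 8 (by push_cast; ring) hQa))
  · exact (Or.inl (pow_eq_one_of_annihilator x _ (X ^ 6 + X ^ 4 + X ^ 2 + 1 : Polynomial (ZMod 2)) (0 : Polynomial (ZMod 2)) 3 8 (by push_cast; ring) hQa))
  · exact (Or.inl (pow_eq_one_of_annihilator x _ (X ^ 5 + X ^ 4 + X + 1 : Polynomial (ZMod 2)) (0 : Polynomial (ZMod 2)) 2 8 (by push_cast; ring) hQa))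
  · exact (Or.inr (Or.inl (pow_eq_one_of_annihilator x _ (X ^ 9 + X ^ 6 + X ^ 3 + 1 : Polynomial (ZMod 2)) (0 : Polynomial (ZMod 2)) 2 12 (by push_cast; ring) hQa)))
  · exact (Or.inr (Or.inl (pow_eq_one_of_annihilator x _ (X ^ 8 + X ^ 7 + X ^ 6 + X ^ 2 + X + 1 : Polynomial (ZMod 2)) (0 : Polynomial (ZMod 2)) 1 12 (by push_cast; ring) hQa)))
  · exact (Or.inr (Or.inr (Or.inl (pow_eq_one_of_annihilator x _ (X ^ 10 + X ^ 8 + X ^ 7 + X ^ 3 + X + 1 : Polynomial (ZMod 2)) (X ^ 12 + -1 * X ^ 11 + X ^ 5 + -1 * X ^ 4 : Polynomial (ZMod 2)) 1 14 (by push_cast; ring) hQa))))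
  · exact (Or.inr (Or.inr (Or.inl (pow_eq_one_of_annihilator x _ (X ^ 10 + X ^ 9 + X ^ 7 + X ^ 3 + X ^ 2 + 1 : Polynomial (ZMod 2)) (X ^ 12 + -1 * X ^ 11 + X ^ 5 + -1 * X ^ 4 : Polynomial (ZMod 2)) 1 14 (by push_cast; ring) hQa))))
  · exact (Or.inl (pow_eq_one_of_annihilator x _ (X ^ 4 + 1 : Polynomial (ZMod 2)) (0 : Polynomial (ZMod 2)) 1 8 (by push_cast; ring) hQa))
  · exact (Or.inl (pow_eq_one_of_annihilator x _ (X ^ 3 + X ^ 2 + X + 1 : Polynomial (ZMod 2)) (0 : Polynomial (ZMod 2)) 0 8 (by push_cast; ring) hQa))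
  · exact (Or.inr (Or.inr (Or.inr (pow_eq_one_of_annihilator x _ (X ^ 10 + X ^ 8 + X ^ 5 + X ^ 4 + X ^ 2 + X + 1 : Polynomial (ZMod 2)) (X ^ 9 + -1 * X ^ 8 + X ^ 6 + -1 * X ^ 4 : Polynomial (ZMod 2)) 0 15 (by push_cast; ring) hQa))))
  · exact (Or.inr (Or.inl (pow_eq_one_of_annihilator x _ (X ^ 7 + X ^ 6 + X + 1 : Polynomial (ZMod 2)) (0 : Polynomial (ZMod 2)) 0 12 (by push_cast; ring) hQa)))
  · exact (Or.inr (Or.inr (Or.inl (pow_eq_one_of_annihilator x _ (X ^ 9 + X ^ 6 + X ^ 5 + X ^ 4 + X ^ 3 + X + 1 : Polynomial (ZMod 2)) (X ^ 10 + -1 * X ^ 3 : Polynomial (ZMod 2)) 0 14 (by push_cast; ring) hQa))))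
  · exact (Or.inr (Or.inr (Or.inr (pow_eq_one_of_annihilator x _ (X ^ 10 + X ^ 9 + X ^ 8 + X ^ 6 + X ^ 5 + X ^ 2 + 1 : Polynomial (ZMod 2)) (X ^ 11 + -1 * X ^ 9 + X ^ 7 + -1 * X ^ 6 : Polynomial (ZMod 2)) 0 15 (by push_cast; ring) hQa))))
  · exact (Or.inr (Or.inl (pow_eq_one_of_annihilator x _ (X ^ 7 + X ^ 5 + X ^ 4 + X ^ 3 + X ^ 2 + 1 : Polynomial (ZMod 2)) (X ^ 9 + -1 * X ^ 3 : Polynomial (ZMod 2)) 0 12 (by push_cast; ring) hQa)))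
  · exact (Or.inr (Or.inr (Or.inl (pow_eq_one_of_annihilator x _ (X ^ 9 + X ^ 8 + X ^ 6 + X ^ 5 + X ^ 4 + X ^ 3 + 1 : Polynomial (ZMod 2)) (X ^ 11 + -1 * X ^ 4 : Polynomial (ZMod 2)) 0 14 (by push_cast; ring) hQa))))
  · exact (Or.inr (Or.inr (Or.inr (pow_eq_one_of_annihilator x _ (X ^ 10 + X ^ 5 + 1 : Polynomial (ZMod 2)) (0 : Polynomial (ZMod 2)) 0 15 (by push_cast; ring) hQa))))

lemma classify_F3_R1 {n : ℕ} (x : (Fin n → ZMod 3) ≃ₗ[ZMod 3] (Fin n → ZMod 3))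
    (h : finrank (ZMod 3) (LinearMap.range ((x : (Fin n → ZMod 3) →ₗ[ZMod 3] (Fin n → ZMod 3)) - LinearMap.id)) ≤ 1) :
    x ^ 2 = 1 ∨ x ^ 3 = 1 := by
  obtain ⟨Q, hQm, hQd, hQa⟩ := exists_annihilator x 1 h
  have hQ : Q = X ^ 1 + ∑ i ∈ Finset.range 1, C (Q.coeff i) * X ^ i := by
    conv_lhs => rw [hQm.as_sum, hQd]
  simp only [Finset.sum_range_succ, Finset.sum_range_zero, zero_add, pow_zero, pow_one, mul_one] at hQ
  have hc : ∀ c : ZMod 3, c = 0 ∨ c = 1 ∨ c = 2 := by decide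
  rcases hc (Q.coeff 0) with h0 | h0 | h0 <;>
    rw [h0] at hQ <;> rw [hQ] at hQa <;>
    simp only [map_zero, map_one, map_ofNat, zero_mul, one_mul, zero_add, add_zero] at hQa
  · exact (Or.inl (pow_eq_one_of_annihilator x _ (X + 1 : Polynomial (ZMod 3)) (0 : Polynomial (ZMod 3)) 1 2 (by push_cast; ring) hQa))
  · exact (Or.inl (pow_eq_one_of_annihilator x _ (1 : Polynomial (ZMod 3)) (0 : Polynomial (ZMod 3)) 0 2 (by push_cast; ring) hQa))
  · exact (Or.inr (pow_eq_one_of_annihilator x _ (X + 2 : Polynomial (ZMod 3)) (X ^ 2 + -1 : Polynomial (ZMod 3)) 0 3 (by push_cast; ring) hQa))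

lemma classify_F3_R2 {n : ℕ} (x : (Fin n → ZMod 3) ≃ₗ[ZMod 3] (Fin n → ZMod 3))
    (h : finrank (ZMod 3) (LinearMap.range ((x : (Fin n → ZMod 3) →ₗ[ZMod 3] (Fin n → ZMod 3)) - LinearMap.id)) ≤ 2) :
    x ^ 8 = 1 ∨ x ^ 6 = 1 := by
  obtain ⟨Q, hQm, hQd, hQa⟩ := exists_annihilator x 2 h
  have hQ : Q = X ^ 2 + ∑ i ∈ Finset.range 2, C (Q.coeff i) * X ^ i := by
    conv_lhs => rw [hQm.as_sum, hQd]
  simp only [Finset.sum_range_succ, Finset.sum_range_zero, zero_add, pow_zero, pow_one, mul_one] at hQ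
  have hc : ∀ c : ZMod 3, c = 0 ∨ c = 1 ∨ c = 2 := by decide
  rcases hc (Q.coeff 0) with h0 | h0 | h0 <;> rcases hc (Q.coeff 1) with h1 | h1 | h1 <;>
    rw [h0, h1] at hQ <;> rw [hQ] at hQa <;>
    simp only [map_zero, map_one, map_ofNat, zero_mul, one_mul, zero_add, add_zero] at hQa
  · exact (Or.inl (pow_eq_one_of_annihilator x _ (X ^ 7 + X ^ 6 + X ^ 5 + X ^ 4 + X ^ 3 + X ^ 2 + X + 1 : Polynomial (ZMod 3)) (0 : Polynomial (ZMod 3)) 2 8 (by push_cast; ring) hQa))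
  · exact (Or.inl (pow_eq_one_of_annihilator x _ (X ^ 6 + X ^ 4 + X ^ 2 + 1 : Polynomial (ZMod 3)) (0 : Polynomial (ZMod 3)) 1 8 (by push_cast; ring) hQa))
  · exact (Or.inr (pow_eq_one_of_annihilator x _ (X ^ 4 + 2 * X ^ 3 + X + 2 : Polynomial (ZMod 3)) (X ^ 6 + -1 * X ^ 4 + X ^ 3 + -1 * X : Polynomial (ZMod 3)) 1 6 (by push_cast; ring) hQa))
  · exact (Or.inl (pow_eq_one_of_annihilator x _ (X ^ 5 + X ^ 4 + X + 1 : Polynomial (ZMod 3)) (0 : Polynomial (ZMod 3)) 0 8 (by push_cast; ring) hQa))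
  · exact (Or.inr (pow_eq_one_of_annihilator x _ (X ^ 3 + 1 : Polynomial (ZMod 3)) (0 : Polynomial (ZMod 3)) 0 6 (by push_cast; ring) hQa))
  · exact (Or.inr (pow_eq_one_of_annihilator x _ (X ^ 3 + 2 * X ^ 2 + 2 * X + 1 : Polynomial (ZMod 3)) (X ^ 5 + X ^ 4 + -1 * X ^ 2 + -1 * X : Polynomial (ZMod 3)) 0 6 (by push_cast; ring) hQa))
  · exact (Or.inr (pow_eq_one_of_annihilator x _ (X ^ 3 + X ^ 2 + 2 * X + 2 : Polynomial (ZMod 3)) (X ^ 4 + -1 : Polynomial (ZMod 3)) 0 6 (by push_cast; ring) hQa))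
  · exact (Or.inl (pow_eq_one_of_annihilator x _ (X ^ 5 + 2 * X ^ 3 + 2 * X ^ 2 + X + 2 : Polynomial (ZMod 3)) (X ^ 6 + X ^ 4 + -1 * X ^ 2 + -1 : Polynomial (ZMod 3)) 0 8 (by push_cast; ring) hQa))
  · exact (Or.inl (pow_eq_one_of_annihilator x _ (X ^ 5 + 2 * X ^ 4 + X ^ 3 + X ^ 2 + 2 : Polynomial (ZMod 3)) (X ^ 7 + X ^ 6 + -1 * X ^ 4 + -1 : Polynomial (ZMod 3)) 0 8 (by push_cast; ring) hQa))

end Classify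

section Mustar

variable (p : ℕ) [Fact p.Prime]

def permHom (m : ℕ) : Equiv.Perm (Fin m) →* ((Fin m → ZMod p) ≃ₗ[ZMod p] (Fin m → ZMod p)) where
  toFun σ := LinearEquiv.funCongrLeft (ZMod p) (ZMod p) σ⁻¹
  map_one' := by
    apply LinearEquiv.toLinearMap_injective
    apply LinearMap.ext
    intro g
    rfl
  map_mul' σ τ := by
    apply LinearEquiv.toLinearMap_injective
    apply LinearMap.ext
    intro g
    rfl

lemma permHom_injective (m : ℕ) : Function.Injective (permHom p m) := by
  intro σ τ h
  ext j
  have happ := congrArg (fun (e : (Fin m → ZMod p) ≃ₗ[ZMod p] (Fin m → ZMod p)) =>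
    e (fun i => if i = j then (1 : ZMod p) else 0) (σ j)) h
  simp only [permHom, MonoidHom.coe_mk, OneHom.coe_mk, LinearEquiv.funCongrLeft_apply,
    LinearMap.funLeft_apply] at happ
  rw [show σ⁻¹ (σ j) = j from σ.symm_apply_apply j] at happ
  rw [if_pos rfl] at happ
  by_cases hc : τ⁻¹ (σ j) = j
  · have := congrArg τ hc
    rw [show τ (τ⁻¹ (σ j)) = σ j from τ.apply_symm_apply (σ j)] at this
    exact congrArg Fin.val this
  · rw [if_neg hc] at happ
    exact absurd happ one_ne_zero

lemma mustar_set_nonempty (m : ℕ) (hm : 2 ≤ m) :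
    {μ : ℕ | ∃ (n : ℕ) (x : (Fin n → ZMod p) ≃ₗ[ZMod p] (Fin n → ZMod p)),
      orderOf x = m ∧
      finrank (ZMod p) (LinearMap.range
        ((x : (Fin n → ZMod p) →ₗ[ZMod p] (Fin n → ZMod p)) - LinearMap.id)) = μ}.Nonempty := by
  have hrot : orderOf (finRotate m) = m := by
    rw [(isCycle_finRotate_of_le hm).orderOf, support_finRotate_of_le hm]
    simp
  refine ⟨_, m, permHom p m (finRotate m), ?_, rfl⟩
  rw [orderOf_injective (permHom p m) (permHom_injective p m), hrot]

lemma mustar_witness (m : ℕ) (hm : 2 ≤ m) :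
    ∃ (n : ℕ) (x : (Fin n → ZMod p) ≃ₗ[ZMod p] (Fin n → ZMod p)),
      orderOf x = m ∧
      finrank (ZMod p) (LinearMap.range
        ((x : (Fin n → ZMod p) →ₗ[ZMod p] (Fin n → ZMod p)) - LinearMap.id)) = mustar p m :=
  Nat.sInf_mem (mustar_set_nonempty p m hm)

lemma mustar_lb (m b : ℕ) (hm : 2 ≤ m)
    (hall : ∀ (n : ℕ) (x : (Fin n → ZMod p) ≃ₗ[ZMod p] (Fin n → ZMod p)), orderOf x = m →
      b ≤ finrank (ZMod p) (LinearMap.range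
        ((x : (Fin n → ZMod p) →ₗ[ZMod p] (Fin n → ZMod p)) - LinearMap.id))) :
    b ≤ mustar p m := by
  obtain ⟨n, x, hx, hr⟩ := mustar_witness p m hm
  rw [← hr]
  exact hall n x hx

lemma mustar_ge1 (m : ℕ) (hm : 2 ≤ m) : 1 ≤ mustar p m := by
  apply mustar_lb p m 1 hm
  intro n x hx
  by_contra hcon
  have h0 : finrank (ZMod p) (LinearMap.range
      ((x : (Fin n → ZMod p) →ₗ[ZMod p] (Fin n → ZMod p)) - LinearMap.id)) = 0 := by omega
  have hbot := Submodule.finrank_eq_zero.mp h0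
  have hzero := LinearMap.range_eq_bot.mp hbot
  have heq : (x : (Fin n → ZMod p) →ₗ[ZMod p] (Fin n → ZMod p)) = LinearMap.id :=
    sub_eq_zero.mp hzero
  have hx1 : x = 1 := by
    apply LinearEquiv.toLinearMap_injective
    exact heq
  rw [hx1, orderOf_one] at hx
  omega

end Mustar

section Assembly







variable (p d : ℕ) [Fact p.Prime]

lemma filter_divisors_eq (hd : 1 ≤ d) :
    d.divisors.filter (fun m => 1 < m) = d.divisors.erase 1 := by
  ext m
  simp only [Finset.mem_filter, Finset.mem_erase]
  constructor
  · rintro ⟨h1, h2⟩; exact ⟨by omega, h1⟩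
  · rintro ⟨h1, h2⟩
    refine ⟨h2, ?_⟩
    have := Nat.pos_of_mem_divisors h2
    omega

lemma sum_phi_filter (hd : 1 ≤ d) :
    ∑ m ∈ d.divisors.filter (fun m => 1 < m), (Nat.totient m : ℝ) = (d : ℝ) - 1 := by
  rw [filter_divisors_eq d hd]
  have h1 : (1 : ℕ) ∈ d.divisors := Nat.one_mem_divisors.mpr (by omega)
  have h2 : ∑ m ∈ d.divisors, (Nat.totient m : ℝ) = (d : ℝ) := by
    rw [← Nat.cast_sum]
    norm_cast
    exact Nat.sum_totient d
  have h3 := Finset.add_sum_erase d.divisors (fun m => (Nat.totient m : ℝ)) h1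
  rw [h2] at h3
  simp only [Nat.totient_one, Nat.cast_one] at h3
  linarith

-- the exceptional weight for p ≥ 5
noncomputable def ep (p : ℕ) (m : ℕ) : ℝ :=
  if (m ∣ p - 1 ∧ 2 ≤ m) ∨ m = p then (Nat.totient m : ℝ) / p else 0

lemma ep_nonneg (m : ℕ) : 0 ≤ ep p m := by
  unfold ep
  split_ifs
  · positivity
  · exact le_refl 0

lemma sum_ep_le (hp5 : 5 ≤ p) :
    ∑ m ∈ d.divisors.filter (fun m => 1 < m), ep p m ≤ 2 := by
  classical
  set D := d.divisors.filter (fun m => 1 < m)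
  set U : Finset ℕ := insert p ((p - 1).divisors.filter (fun m => 1 < m)) with hU
  have hsub : ∀ x ∈ D, ep p x ≠ 0 → x ∈ U := by
    intro x hx hne
    unfold ep at hne
    split_ifs at hne with hcond
    · rcases hcond with ⟨hdvd, h2⟩ | rfl
      · apply Finset.mem_insert_of_mem
        simp only [Finset.mem_filter, Nat.mem_divisors]
        exact ⟨⟨hdvd, by omega⟩, by omega⟩
      · exact Finset.mem_insert_self _ _
    · exact absurd rfl hne
  calc ∑ m ∈ D, ep p m = ∑ m ∈ D.filter (fun m => m ∈ U), ep p m := by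
        rw [Finset.sum_filter_of_ne hsub]
  _ ≤ ∑ m ∈ U, ep p m := by
        apply Finset.sum_le_sum_of_subset_of_nonneg
        · intro x hx
          exact (Finset.mem_filter.mp hx).2
        · intro x _ _
          exact ep_nonneg p x
  _ ≤ 2 := by
        have hpnot : p ∉ (p - 1).divisors.filter (fun m => 1 < m) := by
          simp only [Finset.mem_filter, Nat.mem_divisors]
          rintro ⟨⟨hdvd, hne⟩, _⟩
          have := Nat.le_of_dvd (by omega) hdvd
          omega
        rw [hU, Finset.sum_insert hpnot]
        have hp1 : ep p p = ((p : ℝ) - 1) / p := by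
          unfold ep
          rw [if_pos (Or.inr rfl), Nat.totient_prime (Fact.out : p.Prime)]
          push_cast [Nat.cast_sub (by omega : 1 ≤ p)]
          ring_nf
        have hrest : ∑ m ∈ (p - 1).divisors.filter (fun m => 1 < m), ep p m
            = (∑ m ∈ (p - 1).divisors.filter (fun m => 1 < m), (Nat.totient m : ℝ)) / p := by
          rw [Finset.sum_div]
          apply Finset.sum_congr rfl
          intro m hm
          simp only [Finset.mem_filter, Nat.mem_divisors] at hm
          unfold ep
          rw [if_pos (Or.inl ⟨hm.1.1, by omega⟩)]
        rw [hp1, hrest, sum_phi_filter (p - 1) (by omega)]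
        have hp0 : (0 : ℝ) < p := by positivity
        rw [← add_div, div_le_iff₀ hp0]
        push_cast [Nat.cast_sub (by omega : 1 ≤ p)]
        ring_nf
        nlinarith [hp0]

lemma zpow_neg_le (b : ℕ) (hb : b ≤ mustar p m) (hp1 : 1 ≤ (p:ℝ)) :
    (p : ℝ) ^ (-(mustar p m : ℤ)) ≤ (p : ℝ) ^ (-(b : ℤ)) := by
  apply zpow_le_zpow_right₀ hp1
  omega

lemma pointwise_ge5 (hp5 : 5 ≤ p) (m : ℕ) (hm : 2 ≤ m) :
    (Nat.totient m : ℝ) * (p : ℝ) ^ (-(mustar p m : ℤ)) ≤ (Nat.totient m : ℝ) / 25 + ep p m := by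
  have hp1 : (1:ℝ) ≤ (p:ℝ) := by
    have : (5:ℝ) ≤ (p:ℝ) := by exact_mod_cast hp5
    linarith
  have hphi : (0:ℝ) ≤ (Nat.totient m : ℝ) := by positivity
  rcases le_or_gt 2 (mustar p m) with hmu | hmu
  · have h1 : (p : ℝ) ^ (-(mustar p m : ℤ)) ≤ (p:ℝ) ^ (-(2:ℕ) : ℤ) := zpow_neg_le p 2 hmu hp1
    have h2 : (p:ℝ) ^ (-(2:ℕ) : ℤ) = 1 / ((p:ℝ) * p) := by
      rw [zpow_neg]
      push_cast
      rw [zpow_two]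
      rw [one_div]
    have h3 : (1:ℝ) / ((p:ℝ)*p) ≤ 1 / 25 := by
      apply div_le_div_of_nonneg_left (by norm_num) (by norm_num)
      nlinarith [show (5:ℝ) ≤ (p:ℝ) from by exact_mod_cast hp5]
    calc (Nat.totient m : ℝ) * (p : ℝ) ^ (-(mustar p m : ℤ))
        ≤ (Nat.totient m : ℝ) * (1/25) := by
          apply mul_le_mul_of_nonneg_left _ hphi
          rw [h2] at h1; linarith
    _ ≤ (Nat.totient m : ℝ) / 25 + ep p m := by
          have := ep_nonneg p m; linarith
  · -- exceptional: mustar ≤ 1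
    obtain ⟨n, x, hx, hr⟩ := mustar_witness p m hm
    have hcls := classify_rank_one x (by omega)
    have hdvd : m ∣ p - 1 ∨ m = p := by
      rcases hcls with hc | hc
      · left
        rw [← hx]
        exact orderOf_dvd_of_pow_eq_one hc
      · right
        have hdp : m ∣ p := by rw [← hx]; exact orderOf_dvd_of_pow_eq_one hc
        rcases (Fact.out : p.Prime).eq_one_or_self_of_dvd m hdp with h1 | h1
        · omega
        · exact h1
    have hep : ep p m = (Nat.totient m : ℝ) / p := by
      unfold ep
      rcases hdvd with hc | hc
      · rw [if_pos (Or.inl ⟨hc, hm⟩)]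
      · rw [if_pos (Or.inr hc)]
    have hmu1 : 1 ≤ mustar p m := mustar_ge1 p m hm
    have h1 : (p : ℝ) ^ (-(mustar p m : ℤ)) ≤ (p:ℝ) ^ (-(1:ℕ) : ℤ) := zpow_neg_le p 1 hmu1 hp1
    have h2 : (p:ℝ) ^ (-(1:ℕ) : ℤ) = 1 / p := by
      rw [zpow_neg]
      push_cast
      rw [zpow_one, one_div]
    calc (Nat.totient m : ℝ) * (p : ℝ) ^ (-(mustar p m : ℤ))
        ≤ (Nat.totient m : ℝ) * (1/p) := by
          apply mul_le_mul_of_nonneg_left _ hphi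
          rw [h2] at h1; exact h1
    _ = (Nat.totient m : ℝ) / p := by ring
    _ ≤ (Nat.totient m : ℝ) / 25 + ep p m := by
          rw [hep]
          have : (0:ℝ) ≤ (Nat.totient m : ℝ) / 25 := by positivity
          linarith



lemma Sbound_ge5 (hp5 : 5 ≤ p) (hd : 2 ≤ d) :
    ∑ m ∈ d.divisors.filter (fun m => 1 < m),
      (Nat.totient m : ℝ) * (p : ℝ) ^ (-(mustar p m : ℤ)) ≤ ((d:ℝ) - 1)/25 + 2 := by
  calc ∑ m ∈ d.divisors.filter (fun m => 1 < m),
      (Nat.totient m : ℝ) * (p : ℝ) ^ (-(mustar p m : ℤ))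
      ≤ ∑ m ∈ d.divisors.filter (fun m => 1 < m), ((Nat.totient m : ℝ)/25 + ep p m) := by
        apply Finset.sum_le_sum
        intro m hm
        simp only [Finset.mem_filter] at hm
        exact pointwise_ge5 p hp5 m hm.2
  _ = (∑ m ∈ d.divisors.filter (fun m => 1 < m), (Nat.totient m : ℝ))/25
      + ∑ m ∈ d.divisors.filter (fun m => 1 < m), ep p m := by
        rw [Finset.sum_add_distrib, Finset.sum_div]
  _ ≤ ((d:ℝ) - 1)/25 + 2 := by
        rw [sum_phi_filter d (by omega)]
        have := sum_ep_le p d hp5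
        linarith

lemma dz_eq (hd : 2 ≤ d) : (d:ℝ) * zetastar p d
    = 1 + ∑ m ∈ d.divisors.filter (fun m => 1 < m),
      (Nat.totient m : ℝ) * (p : ℝ) ^ (-(mustar p m : ℤ)) := by
  unfold zetastar
  have hd0 : (d:ℝ) ≠ 0 := by positivity
  field_simp

lemma conclude (hd : 2 ≤ d) (k c slope : ℝ)
    (hk : k ≤ zetastar p d) (hS : (d:ℝ) * zetastar p d ≤ c + (d:ℝ) * slope)
    (hks : slope < k) : (d:ℝ) ≤ c / (k - slope) := by
  have hd0 : (0:ℝ) < (d:ℝ) := by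
    have : (2:ℝ) ≤ (d:ℝ) := by exact_mod_cast hd
    linarith
  rw [le_div_iff₀ (by linarith : (0:ℝ) < k - slope)]
  have h1 : (d:ℝ) * k ≤ (d:ℝ) * zetastar p d := by
    apply mul_le_mul_of_nonneg_left hk hd0.le
  nlinarith

lemma main_ge5 (hp5 : 5 ≤ p) (hd : 2 ≤ d) (k : ℝ) (hk : k ≤ zetastar p d)
    (hk4 : 0.04 < k) : (d : ℝ) ≤ 3 / (k - 0.04) := by
  have h1 : (d:ℝ) * zetastar p d ≤ 3 + (d:ℝ) * 0.04 := by
    rw [dz_eq p d hd, show (0.04:ℝ) = 1/25 by norm_num]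
    have := Sbound_ge5 p d hp5 hd
    linarith
  exact conclude p d hd k 3 0.04 hk h1 hk4












section Pcases

lemma mustar_ge2' (p : ℕ) [Fact p.Prime] (m : ℕ) (hm : 2 ≤ m)
    (h1 : ¬ m ∣ p - 1) (h2 : ¬ m ∣ p) : 2 ≤ mustar p m := by
  apply mustar_lb p m 2 hm
  intro n x hx
  by_contra hcon
  rcases classify_rank_one x (by omega) with hc | hc
  · exact h1 (hx ▸ orderOf_dvd_of_pow_eq_one hc)
  · exact h2 (hx ▸ orderOf_dvd_of_pow_eq_one hc)

lemma mustar3_ge3 (m : ℕ) (hm : 2 ≤ m) (h8 : ¬ m ∣ 8) (h6 : ¬ m ∣ 6) : 3 ≤ mustar 3 m := by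
  apply mustar_lb 3 m 3 hm
  intro n x hx
  by_contra hcon
  rcases classify_F3_R2 x (by omega) with hc | hc
  · exact h8 (hx ▸ orderOf_dvd_of_pow_eq_one hc)
  · exact h6 (hx ▸ orderOf_dvd_of_pow_eq_one hc)

lemma mustar2_ge3 (m : ℕ) (hm : 2 ≤ m) (h4 : ¬ m ∣ 4) (h3 : ¬ m ∣ 3) : 3 ≤ mustar 2 m := by
  apply mustar_lb 2 m 3 hm
  intro n x hx
  by_contra hcon
  rcases classify_F2_R2 x (by omega) with hc | hc
  · exact h4 (hx ▸ orderOf_dvd_of_pow_eq_one hc)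
  · exact h3 (hx ▸ orderOf_dvd_of_pow_eq_one hc)

lemma mustar2_ge4 (m : ℕ) (hm : 2 ≤ m) (h4 : ¬ m ∣ 4) (h6 : ¬ m ∣ 6) (h7 : ¬ m ∣ 7) :
    4 ≤ mustar 2 m := by
  apply mustar_lb 2 m 4 hm
  intro n x hx
  by_contra hcon
  rcases classify_F2_R3 x (by omega) with hc | hc | hc
  · exact h4 (hx ▸ orderOf_dvd_of_pow_eq_one hc)
  · exact h6 (hx ▸ orderOf_dvd_of_pow_eq_one hc)
  · exact h7 (hx ▸ orderOf_dvd_of_pow_eq_one hc)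

lemma mustar2_ge5 (m : ℕ) (hm : 2 ≤ m) (h8 : ¬ m ∣ 8) (h12 : ¬ m ∣ 12) (h14 : ¬ m ∣ 14)
    (h15 : ¬ m ∣ 15) : 5 ≤ mustar 2 m := by
  apply mustar_lb 2 m 5 hm
  intro n x hx
  by_contra hcon
  rcases classify_F2_R4 x (by omega) with hc | hc | hc | hc
  · exact h8 (hx ▸ orderOf_dvd_of_pow_eq_one hc)
  · exact h12 (hx ▸ orderOf_dvd_of_pow_eq_one hc)
  · exact h14 (hx ▸ orderOf_dvd_of_pow_eq_one hc)
  · exact h15 (hx ▸ orderOf_dvd_of_pow_eq_one hc)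

lemma fterm_le (p : ℕ) [Fact p.Prime] (m b : ℕ) (hb : b ≤ mustar p m) :
    (Nat.totient m : ℝ) * (p : ℝ) ^ (-(mustar p m : ℤ)) ≤ (Nat.totient m : ℝ) / (p ^ b : ℕ) := by
  have hp2 : 2 ≤ p := (Fact.out : p.Prime).two_le
  have hp1 : (1:ℝ) ≤ (p:ℝ) := by exact_mod_cast (by omega : 1 ≤ p)
  have h1 := zpow_neg_le p b hb hp1
  have h2 : (p:ℝ) ^ (-(b:ℕ) : ℤ) = 1 / ((p^b : ℕ) : ℝ) := by
    rw [zpow_neg, one_div]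
    congr 1
    push_cast
    rw [zpow_natCast]
  calc (Nat.totient m : ℝ) * (p : ℝ) ^ (-(mustar p m : ℤ))
      ≤ (Nat.totient m : ℝ) * ((p:ℝ) ^ (-(b:ℕ) : ℤ)) := by
        apply mul_le_mul_of_nonneg_left h1 (by positivity)
  _ = (Nat.totient m : ℝ) / (p ^ b : ℕ) := by rw [h2]; ring

noncomputable def e3 (m : ℕ) : ℝ :=
  (if m = 2 then (1/3:ℝ) else 0) + (if m = 3 then (2/3:ℝ) else 0) +
  (if m = 4 then (2/9:ℝ) else 0) + (if m = 6 then (2/9:ℝ) else 0) +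
  (if m = 8 then (4/9:ℝ) else 0)

lemma e3_nonneg (m : ℕ) : 0 ≤ e3 m := by
  unfold e3
  repeat' apply add_nonneg
  all_goals split <;> norm_num

noncomputable def e2 (m : ℕ) : ℝ :=
  (if m = 2 then (117/250:ℝ) else 0) + (if m = 3 then (109/250:ℝ) else 0) +
  (if m = 4 then (109/250:ℝ) else 0) + (if m = 5 then (61/500:ℝ) else 0) +
  (if m = 6 then (93/500:ℝ) else 0) + (if m = 7 then (279/500:ℝ) else 0) +
  (if m = 8 then (61/500:ℝ) else 0) + (if m = 12 then (61/500:ℝ) else 0) +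
  (if m = 14 then (183/1000:ℝ) else 0) + (if m = 15 then (122/500:ℝ) else 0)

lemma e2_nonneg (m : ℕ) : 0 ≤ e2 m := by
  unfold e2
  repeat' apply add_nonneg
  all_goals split <;> norm_num

lemma pointwise_3 (m : ℕ) (hm : 2 ≤ m) :
    (Nat.totient m : ℝ) * (3 : ℝ) ^ (-(mustar 3 m : ℤ)) ≤ (Nat.totient m : ℝ) * (1/25) + e3 m := by
  by_cases hc2 : m = 2
  · subst hc2
    have h := fterm_le 3 2 1 (mustar_ge1 3 2 (by norm_num))
    rw [show Nat.totient 2 = 1 by decide] at h ⊢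
    refine h.trans ?_
    unfold e3
    norm_num
  · 
    by_cases hc3 : m = 3
    · subst hc3
      have h := fterm_le 3 3 1 (mustar_ge1 3 3 (by norm_num))
      rw [show Nat.totient 3 = 2 by decide] at h ⊢
      refine h.trans ?_
      unfold e3
      norm_num
    · 
      by_cases hc4 : m = 4
      · subst hc4
        have h := fterm_le 3 4 2 (mustar_ge2' 3 4 (by norm_num) (by decide) (by decide))
        rw [show Nat.totient 4 = 2 by decide] at h ⊢
        refine h.trans ?_
        unfold e3
        norm_num
      · 
        by_cases hc6 : m = 6
        · subst hc6
          have h := fterm_le 3 6 2 (mustar_ge2' 3 6 (by norm_num) (by decide) (by decide))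
          rw [show Nat.totient 6 = 2 by decide] at h ⊢
          refine h.trans ?_
          unfold e3
          norm_num
        · 
          by_cases hc8 : m = 8
          · subst hc8
            have h := fterm_le 3 8 2 (mustar_ge2' 3 8 (by norm_num) (by decide) (by decide))
            rw [show Nat.totient 8 = 4 by decide] at h ⊢
            refine h.trans ?_
            unfold e3
            norm_num
          · 
            have hd8 : ¬ m ∣ 8 := by
              intro hdvd
              have := Nat.le_of_dvd (by norm_num) hdvd
              interval_cases m <;> omega
            have hd6 : ¬ m ∣ 6 := by
              intro hdvd
              have := Nat.le_of_dvd (by norm_num) hdvd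
              interval_cases m <;> omega
            have h := fterm_le 3 m 3 (mustar3_ge3 m hm hd8 hd6)
            have he : e3 m = 0 := by
              unfold e3
              rw [if_neg hc2, if_neg hc3, if_neg hc4, if_neg hc6, if_neg hc8]
              norm_num
            rw [he, add_zero]
            refine h.trans ?_
            have hphi : (0:ℝ) ≤ (Nat.totient m : ℝ) := by positivity
            rw [show ((3^3 : ℕ):ℝ) = 27 by norm_num]
            rw [div_le_iff₀ (by norm_num : (0:ℝ) < 27)]
            nlinarith [hphi]

lemma pointwise_2 (m : ℕ) (hm : 2 ≤ m) :
    (Nat.totient m : ℝ) * (2 : ℝ) ^ (-(mustar 2 m : ℤ)) ≤ (Nat.totient m : ℝ) * (4/125) + e2 m := by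
  by_cases hc2 : m = 2
  · subst hc2
    have h := fterm_le 2 2 1 (mustar_ge1 2 2 (by norm_num))
    rw [show Nat.totient 2 = 1 by decide] at h ⊢
    refine h.trans ?_
    unfold e2
    norm_num
  · 
    by_cases hc3 : m = 3
    · subst hc3
      have h := fterm_le 2 3 2 (mustar_ge2' 2 3 (by norm_num) (by decide) (by decide))
      rw [show Nat.totient 3 = 2 by decide] at h ⊢
      refine h.trans ?_
      unfold e2
      norm_num
    · 
      by_cases hc4 : m = 4
      · subst hc4
        have h := fterm_le 2 4 2 (mustar_ge2' 2 4 (by norm_num) (by decide) (by decide))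
        rw [show Nat.totient 4 = 2 by decide] at h ⊢
        refine h.trans ?_
        unfold e2
        norm_num
      · 
        by_cases hc5 : m = 5
        · subst hc5
          have h := fterm_le 2 5 4 (mustar2_ge4 5 (by norm_num) (by decide) (by decide) (by decide))
          rw [show Nat.totient 5 = 4 by decide] at h ⊢
          refine h.trans ?_
          unfold e2
          norm_num
        · 
          by_cases hc6 : m = 6
          · subst hc6
            have h := fterm_le 2 6 3 (mustar2_ge3 6 (by norm_num) (by decide) (by decide))
            rw [show Nat.totient 6 = 2 by decide] at h ⊢
            refine h.trans ?_
            unfold e2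
            norm_num
          · 
            by_cases hc7 : m = 7
            · subst hc7
              have h := fterm_le 2 7 3 (mustar2_ge3 7 (by norm_num) (by decide) (by decide))
              rw [show Nat.totient 7 = 6 by decide] at h ⊢
              refine h.trans ?_
              unfold e2
              norm_num
            · 
              by_cases hc8 : m = 8
              · subst hc8
                have h := fterm_le 2 8 4 (mustar2_ge4 8 (by norm_num) (by decide) (by decide) (by decide))
                rw [show Nat.totient 8 = 4 by decide] at h ⊢
                refine h.trans ?_
                unfold e2
                norm_num
              · 
                by_cases hc12 : m = 12
                · subst hc12
                  have h := fterm_le 2 12 4 (mustar2_ge4 12 (by norm_num) (by decide) (by decide) (by decide))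
                  rw [show Nat.totient 12 = 4 by decide] at h ⊢
                  refine h.trans ?_
                  unfold e2
                  norm_num
                · 
                  by_cases hc14 : m = 14
                  · subst hc14
                    have h := fterm_le 2 14 4 (mustar2_ge4 14 (by norm_num) (by decide) (by decide) (by decide))
                    rw [show Nat.totient 14 = 6 by decide] at h ⊢
                    refine h.trans ?_
                    unfold e2
                    norm_num
                  · 
                    by_cases hc15 : m = 15
                    · subst hc15
                      have h := fterm_le 2 15 4 (mustar2_ge4 15 (by norm_num) (by decide) (by decide) (by decide))
                      rw [show Nat.totient 15 = 8 by decide] at h ⊢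
                      refine h.trans ?_
                      unfold e2
                      norm_num
                    · 
                      have hd8 : ¬ m ∣ 8 := by
                        intro hdvd
                        have := Nat.le_of_dvd (by norm_num) hdvd
                        interval_cases m <;> omega
                      have hd12 : ¬ m ∣ 12 := by
                        intro hdvd
                        have := Nat.le_of_dvd (by norm_num) hdvd
                        interval_cases m <;> omega
                      have hd14 : ¬ m ∣ 14 := by
                        intro hdvd
                        have := Nat.le_of_dvd (by norm_num) hdvd
                        interval_cases m <;> omega
                      have hd15 : ¬ m ∣ 15 := by
                        intro hdvd
                        have := Nat.le_of_dvd (by norm_num) hdvd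
                        interval_cases m <;> omega
                      have h := fterm_le 2 m 5 (mustar2_ge5 m hm hd8 hd12 hd14 hd15)
                      have he : e2 m = 0 := by
                        unfold e2
                        rw [if_neg hc2, if_neg hc3, if_neg hc4, if_neg hc5, if_neg hc6, if_neg hc7, if_neg hc8, if_neg hc12, if_neg hc14, if_neg hc15]
                        norm_num
                      rw [he, add_zero]
                      refine h.trans ?_
                      have hphi : (0:ℝ) ≤ (Nat.totient m : ℝ) := by positivity
                      rw [show ((2^5 : ℕ):ℝ) = 32 by norm_num]
                      rw [div_le_iff₀ (by norm_num : (0:ℝ) < 32)]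
                      nlinarith [hphi]


lemma sum_ind (D : Finset ℕ) (c : ℕ) (v : ℝ) (hv : 0 ≤ v) :
    ∑ m ∈ D, (if m = c then v else 0) ≤ v := by
  rw [Finset.sum_ite_eq' D c (fun _ => v)]
  split_ifs <;> simp [hv]

lemma sum_e3_le (d : ℕ) : ∑ m ∈ d.divisors.filter (fun m => 1 < m), e3 m ≤ 17/9 := by
  unfold e3
  rw [Finset.sum_add_distrib, Finset.sum_add_distrib, Finset.sum_add_distrib,
    Finset.sum_add_distrib]
  have i2 := sum_ind (d.divisors.filter (fun m => 1 < m)) 2 (1/3) (by norm_num)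
  have i3 := sum_ind (d.divisors.filter (fun m => 1 < m)) 3 (2/3) (by norm_num)
  have i4 := sum_ind (d.divisors.filter (fun m => 1 < m)) 4 (2/9) (by norm_num)
  have i6 := sum_ind (d.divisors.filter (fun m => 1 < m)) 6 (2/9) (by norm_num)
  have i8 := sum_ind (d.divisors.filter (fun m => 1 < m)) 8 (4/9) (by norm_num)
  linarith

lemma sum_e2_le (d : ℕ) : ∑ m ∈ d.divisors.filter (fun m => 1 < m), e2 m ≤ 2877/1000 := by
  unfold e2
  rw [Finset.sum_add_distrib, Finset.sum_add_distrib, Finset.sum_add_distrib,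
    Finset.sum_add_distrib, Finset.sum_add_distrib, Finset.sum_add_distrib,
    Finset.sum_add_distrib, Finset.sum_add_distrib, Finset.sum_add_distrib]
  have i2 := sum_ind (d.divisors.filter (fun m => 1 < m)) 2 (117/250) (by norm_num)
  have i3 := sum_ind (d.divisors.filter (fun m => 1 < m)) 3 (109/250) (by norm_num)
  have i4 := sum_ind (d.divisors.filter (fun m => 1 < m)) 4 (109/250) (by norm_num)
  have i5 := sum_ind (d.divisors.filter (fun m => 1 < m)) 5 (61/500) (by norm_num)
  have i6 := sum_ind (d.divisors.filter (fun m => 1 < m)) 6 (93/500) (by norm_num)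
  have i7 := sum_ind (d.divisors.filter (fun m => 1 < m)) 7 (279/500) (by norm_num)
  have i8 := sum_ind (d.divisors.filter (fun m => 1 < m)) 8 (61/500) (by norm_num)
  have i12 := sum_ind (d.divisors.filter (fun m => 1 < m)) 12 (61/500) (by norm_num)
  have i14 := sum_ind (d.divisors.filter (fun m => 1 < m)) 14 (183/1000) (by norm_num)
  have i15 := sum_ind (d.divisors.filter (fun m => 1 < m)) 15 (122/500) (by norm_num)
  linarith

lemma Sbound_3 (d : ℕ) (hd : 2 ≤ d) :
    ∑ m ∈ d.divisors.filter (fun m => 1 < m),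
      (Nat.totient m : ℝ) * (3 : ℝ) ^ (-(mustar 3 m : ℤ)) ≤ ((d:ℝ) - 1)/25 + 17/9 := by
  calc ∑ m ∈ d.divisors.filter (fun m => 1 < m),
      (Nat.totient m : ℝ) * (3 : ℝ) ^ (-(mustar 3 m : ℤ))
      ≤ ∑ m ∈ d.divisors.filter (fun m => 1 < m), ((Nat.totient m : ℝ) * (1/25) + e3 m) := by
        apply Finset.sum_le_sum
        intro m hm
        simp only [Finset.mem_filter] at hm
        exact pointwise_3 m hm.2
  _ = (∑ m ∈ d.divisors.filter (fun m => 1 < m), (Nat.totient m : ℝ)) * (1/25)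
      + ∑ m ∈ d.divisors.filter (fun m => 1 < m), e3 m := by
        rw [Finset.sum_add_distrib, Finset.sum_mul]
  _ ≤ ((d:ℝ) - 1)/25 + 17/9 := by
        rw [sum_phi_filter d (by omega)]
        have := sum_e3_le d
        linarith

lemma Sbound_2 (d : ℕ) (hd : 2 ≤ d) :
    ∑ m ∈ d.divisors.filter (fun m => 1 < m),
      (Nat.totient m : ℝ) * (2 : ℝ) ^ (-(mustar 2 m : ℤ)) ≤ ((d:ℝ) - 1)*(4/125) + 2877/1000 := by
  calc ∑ m ∈ d.divisors.filter (fun m => 1 < m),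
      (Nat.totient m : ℝ) * (2 : ℝ) ^ (-(mustar 2 m : ℤ))
      ≤ ∑ m ∈ d.divisors.filter (fun m => 1 < m), ((Nat.totient m : ℝ) * (4/125) + e2 m) := by
        apply Finset.sum_le_sum
        intro m hm
        simp only [Finset.mem_filter] at hm
        exact pointwise_2 m hm.2
  _ = (∑ m ∈ d.divisors.filter (fun m => 1 < m), (Nat.totient m : ℝ)) * (4/125)
      + ∑ m ∈ d.divisors.filter (fun m => 1 < m), e2 m := by
        rw [Finset.sum_add_distrib, Finset.sum_mul]
  _ ≤ ((d:ℝ) - 1)*(4/125) + 2877/1000 := by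
        rw [sum_phi_filter d (by omega)]
        have := sum_e2_le d
        linarith

lemma main_3 (d : ℕ) (hd : 2 ≤ d) (k : ℝ) (hk : k ≤ zetastar 3 d)
    (hk4 : 0.04 < k) : (d : ℝ) ≤ 3 / (k - 0.04) := by
  have h1 : (d:ℝ) * zetastar 3 d ≤ 3 + (d:ℝ) * 0.04 := by
    rw [dz_eq 3 d hd, show (0.04:ℝ) = 1/25 by norm_num]
    have := Sbound_3 d hd
    linarith
  exact conclude 3 d hd k 3 0.04 hk h1 hk4

lemma main_2 (d : ℕ) (hd : 2 ≤ d) (k : ℝ) (hk : k ≤ zetastar 2 d)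
    (hk4 : 0.032 < k) : (d : ℝ) ≤ 4 / (k - 0.032) := by
  have h1 : (d:ℝ) * zetastar 2 d ≤ 4 + (d:ℝ) * 0.032 := by
    rw [dz_eq 2 d hd, show (0.032:ℝ) = 4/125 by norm_num]
    have := Sbound_2 d hd
    linarith
  exact conclude 2 d hd k 4 0.032 hk h1 hk4


end Pcases

/-- If `p > 2` and `ζ*(d,p) ≥ k > 0.04` then `d ≤ 3/(k − 0.04)`;
if `p = 2` and `ζ*(d,2) ≥ k > 0.032` then `d ≤ 4/(k − 0.032)`. -/
theorem zetastar_degree_bound (p d : ℕ) (hp : p.Prime) (hd : 2 ≤ d) (k : ℝ) :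
    (2 < p → k ≤ zetastar p d → 0.04 < k → (d : ℝ) ≤ 3 / (k - 0.04)) ∧
    (p = 2 → k ≤ zetastar p d → 0.032 < k → (d : ℝ) ≤ 4 / (k - 0.032)) := by
  haveI : Fact p.Prime := ⟨hp⟩
  constructor
  · intro hp2 hk hk4
    by_cases hp3 : p = 3
    · subst hp3
      exact main_3 d hd k hk hk4
    · have hp5 : 5 ≤ p := by
        rcases Nat.lt_or_ge p 5 with h | h
        · interval_cases p
          · exact absurd rfl hp3
          · exact absurd hp (by norm_num)
        · exact h
      exact main_ge5 p d hp5 hd k hk hk4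
  · intro hp2 hk hk4
    subst hp2
    exact main_2 d hd k hk hk4
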